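/- Let p be a prime and let f : ℤ_p → ℤ_p be a compatible function that preserves the normalized Haar measure μ_p. Then f is a bijection of ℤ_p onto itself. -/

import Mathlib

open MeasureTheory Filter

/-- Borel measurable structure on the `p`-adic integers. -/
noncomputable instance padicMS (p : ℕ) [Fact p.Prime] : MeasurableSpace ℤ_[p] := borel _

instance padicBS (p : ℕ) [Fact p.Prime] : BorelSpace ℤ_[p] := ⟨rfl⟩

/-- The Haar measure `μ_p` on `ℤ_p`, normalized so that `μ_p(ℤ_p) = 1`. -/
noncomputable def padicHaar (p : ℕ) [Fact p.Prime] : Measure ℤ_[p] :=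
  Measure.addHaarMeasure (⊤ : TopologicalSpace.PositiveCompacts ℤ_[p])

/-- The map `f̄_k : ℤ/p^kℤ → ℤ/p^kℤ` induced by `f : ℤ_p → ℤ_p` via reduction
modulo `p^k` (well-defined whenever `f` is compatible, i.e. 1-Lipschitz). -/
noncomputable def modMap (p : ℕ) [Fact p.Prime] (f : ℤ_[p] → ℤ_[p]) (k : ℕ) :
    ZMod (p ^ k) → ZMod (p ^ k) :=
  fun z => PadicInt.toZModPow k (f ((z.val : ℕ) : ℤ_[p]))

/-- The map `F̄_k : (ℤ/p^kℤ)^n → (ℤ/p^kℤ)^m` induced by `F : ℤ_p^n → ℤ_p^m` via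
coordinatewise reduction modulo `p^k` (well-defined whenever `F` is compatible). -/
noncomputable def modMapV (p : ℕ) [Fact p.Prime] {n m : ℕ}
    (F : (Fin n → ℤ_[p]) → (Fin m → ℤ_[p])) (k : ℕ) :
    (Fin n → ZMod (p ^ k)) → (Fin m → ZMod (p ^ k)) :=
  fun v i => PadicInt.toZModPow k (F (fun j => ((v j).val : ℤ_[p])) i)

/-- The sphere `S_{p^{-r}}(y) = {z : ‖z - y‖ = p^{-r}}` in `ℤ_p`. -/
def padicSphere (p : ℕ) [Fact p.Prime] (y : ℤ_[p]) (r : ℕ) : Set ℤ_[p] :=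
  {z : ℤ_[p] | ‖z - y‖ = (p : ℝ) ^ (-(r : ℤ))}

/-- The probability measure on the sphere `S_{p^{-r}}(y)`, obtained by restricting the
normalized Haar measure `μ_p` to the sphere and normalizing. -/
noncomputable def sphereMeasure (p : ℕ) [Fact p.Prime] (y : ℤ_[p]) (r : ℕ) : Measure ℤ_[p] :=
  (padicHaar p (padicSphere p y r))⁻¹ • (padicHaar p).restrict (padicSphere p y r)

/-- `f` is ergodic on the sphere `S_{p^{-r}}(y)`: it maps the sphere into itself, preserves
the normalized restriction of the Haar measure to the sphere, and every invariant
measurable subset of the sphere has normalized measure `0` or `1`. -/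
def ErgodicOnSphere (p : ℕ) [Fact p.Prime] (f : ℤ_[p] → ℤ_[p]) (y : ℤ_[p]) (r : ℕ) : Prop :=
  Set.MapsTo f (padicSphere p y r) (padicSphere p y r) ∧
  (∀ A : Set ℤ_[p], MeasurableSet A →
      sphereMeasure p y r (f ⁻¹' A) = sphereMeasure p y r A) ∧
  (∀ A : Set ℤ_[p], MeasurableSet A → A ⊆ padicSphere p y r →
      f ⁻¹' A ∩ padicSphere p y r = A →
      sphereMeasure p y r A = 0 ∨ sphereMeasure p y r A = 1)

/-- `d ∈ ℤ_p` is primitive modulo `p²`: its image in `ℤ/p²ℤ` generates the whole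
group of units `(ℤ/p²ℤ)ˣ`. -/
def PrimitiveModSq (p : ℕ) [Fact p.Prime] (d : ℤ_[p]) : Prop :=
  ∃ u : (ZMod (p ^ 2))ˣ, (u : ZMod (p ^ 2)) = PadicInt.toZModPow 2 d ∧
    ∀ v : (ZMod (p ^ 2))ˣ, v ∈ Subgroup.zpowers u

section Aux
variable (p : ℕ) [Fact p.Prime]

lemma toZModPow_eq_iff' (k : ℕ) (x y : ℤ_[p]) :
    PadicInt.toZModPow k x = PadicInt.toZModPow k y ↔ ‖x - y‖ ≤ (p : ℝ) ^ (-(k : ℤ)) := by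
  rw [PadicInt.norm_le_pow_iff_mem_span_pow, ← PadicInt.ker_toZModPow, RingHom.mem_ker,
    map_sub, sub_eq_zero]

instance : NeZero (p ^ 0) := ⟨one_ne_zero⟩

lemma pk_nezero (k : ℕ) : NeZero (p ^ k) :=
  ⟨pow_ne_zero _ (Fact.out : p.Prime).ne_zero⟩

lemma toZModPow_val (k : ℕ) (c : ZMod (p ^ k)) :
    PadicInt.toZModPow k ((c.val : ℕ) : ℤ_[p]) = c := by
  haveI := pk_nezero p k
  rw [map_natCast, ZMod.natCast_zmod_val]

/-- fiber of the reduction map -/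
def fib (k : ℕ) (c : ZMod (p ^ k)) : Set ℤ_[p] := PadicInt.toZModPow k ⁻¹' {c}

lemma fib_measurable (k : ℕ) (c : ZMod (p ^ k)) : MeasurableSet (fib p k c) := by
  obtain ⟨v, hv⟩ : ∃ v : ℤ_[p], PadicInt.toZModPow k v = c := ⟨_, toZModPow_val p k c⟩
  have : fib p k c = Metric.closedBall v ((p : ℝ) ^ (-(k : ℤ))) := by
    ext z
    rw [fib, Set.mem_preimage, Set.mem_singleton_iff, ← hv, toZModPow_eq_iff',
      Metric.mem_closedBall, dist_eq_norm]
  rw [this]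
  exact measurableSet_closedBall

lemma fib_measure_eq (k : ℕ) (c : ZMod (p ^ k)) :
    padicHaar p (fib p k c) = padicHaar p (fib p k 0) := by
  have h : (fun z : ℤ_[p] => ((c.val : ℕ) : ℤ_[p]) + z) ⁻¹' fib p k c = fib p k 0 := by
    ext z
    simp only [fib, Set.mem_preimage, Set.mem_singleton_iff, map_add, toZModPow_val]
    exact add_eq_left
  rw [padicHaar, ← measure_preimage_add (Measure.addHaarMeasure ⊤) (((c.val : ℕ)) : ℤ_[p]) (fib p k c), h]

lemma haar_univ : padicHaar p Set.univ = 1 := by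
  rw [padicHaar, ← TopologicalSpace.PositiveCompacts.coe_top (α := ℤ_[p])]
  exact Measure.addHaarMeasure_self

lemma fib_disjoint (k : ℕ) : Pairwise (Function.onFun Disjoint (fib p k)) := by
  intro a b hab
  refine Set.disjoint_left.2 fun z hza hzb => hab ?_
  have h1 : PadicInt.toZModPow k z = a := hza
  have h2 : PadicInt.toZModPow k z = b := hzb
  rw [← h1, ← h2]

lemma fib_cover (k : ℕ) : (⋃ c, fib p k c) = Set.univ := by
  ext z; simp [fib]

lemma fib_sum (k : ℕ) :
    ∑' c : ZMod (p ^ k), padicHaar p (fib p k c) = 1 := by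
  rw [← measure_iUnion (fib_disjoint p k) (fib_measurable p k), fib_cover, haar_univ]

lemma fib_ne_zero (k : ℕ) : padicHaar p (fib p k 0) ≠ 0 := by
  intro h
  have := fib_sum p k
  simp_rw [fib_measure_eq p k, h] at this
  simp at this

lemma fib_ne_top (k : ℕ) : padicHaar p (fib p k 0) ≠ ⊤ := by
  intro h
  have hs := fib_sum p k
  haveI := pk_nezero p k
  have : padicHaar p (fib p k 0) ≤ ∑' c : ZMod (p ^ k), padicHaar p (fib p k c) :=
    le_trans (le_of_eq (fib_measure_eq p k 0).symm) (ENNReal.le_tsum 0)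
  rw [hs, h] at this
  simp at this

end Aux

section Aux2
variable (p : ℕ) [Fact p.Prime]

lemma key_compat (f : ℤ_[p] → ℤ_[p]) (hf : ∀ x y : ℤ_[p], ‖f x - f y‖ ≤ ‖x - y‖)
    (k : ℕ) (x : ℤ_[p]) :
    PadicInt.toZModPow k (f x) = modMap p f k (PadicInt.toZModPow k x) := by
  have h1 : PadicInt.toZModPow k ((((PadicInt.toZModPow k x).val : ℕ)) : ℤ_[p]) =
      PadicInt.toZModPow k x := toZModPow_val p k _
  have h2 := (toZModPow_eq_iff' p k _ _).1 h1
  exact (toZModPow_eq_iff' p k _ _).2 (le_trans (hf x _) ((toZModPow_eq_iff' p k x _).1 h1.symm))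

lemma modMap_injective (f : ℤ_[p] → ℤ_[p]) (hf : ∀ x y : ℤ_[p], ‖f x - f y‖ ≤ ‖x - y‖)
    (hmp : ∀ A : Set ℤ_[p], MeasurableSet A → padicHaar p (f ⁻¹' A) = padicHaar p A)
    (k : ℕ) : Function.Injective (modMap p f k) := by
  intro a b hab
  by_contra hne
  have hsub : fib p k a ∪ fib p k b ⊆ f ⁻¹' fib p k (modMap p f k a) := by
    rintro z (hz | hz)
    · have h1 : PadicInt.toZModPow k z = a := hz
      show PadicInt.toZModPow k (f z) ∈ ({modMap p f k a} : Set (ZMod (p ^ k)))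
      rw [key_compat p f hf k z, h1]; rfl
    · have h1 : PadicInt.toZModPow k z = b := hz
      show PadicInt.toZModPow k (f z) ∈ ({modMap p f k a} : Set (ZMod (p ^ k)))
      rw [key_compat p f hf k z, h1, ← hab]; rfl
  have h1 : padicHaar p (f ⁻¹' fib p k (modMap p f k a)) = padicHaar p (fib p k 0) := by
    rw [hmp _ (fib_measurable p k _), fib_measure_eq]
  have h2 : padicHaar p (fib p k a ∪ fib p k b) =
      padicHaar p (fib p k 0) + padicHaar p (fib p k 0) := by
    rw [measure_union (μ := padicHaar p) (fib_disjoint p k hne) (fib_measurable p k b),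
      fib_measure_eq p k a, fib_measure_eq p k b]
  have hle := measure_mono (μ := padicHaar p) hsub
  rw [h1, h2] at hle
  exact absurd hle (not_le.2 (ENNReal.lt_add_right (fib_ne_top p k) (fib_ne_zero p k)))

end Aux2


/-- A compatible (1-Lipschitz) function `f : ℤ_p → ℤ_p` that preserves the normalized
Haar measure `μ_p` is a bijection of `ℤ_p` onto itself. -/
theorem bijective_of_compatible_measurePreserving (p : ℕ) [Fact p.Prime]
    (f : ℤ_[p] → ℤ_[p]) (hf : ∀ x y : ℤ_[p], ‖f x - f y‖ ≤ ‖x - y‖)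
    (hmp : ∀ A : Set ℤ_[p], MeasurableSet A → padicHaar p (f ⁻¹' A) = padicHaar p A) :
    Function.Bijective f := by
  have hinj : ∀ k : ℕ, Function.Injective (modMap p f k) := modMap_injective p f hf hmp
  constructor
  · intro x y hxy
    by_contra hne
    have hpos : 0 < ‖x - y‖ := norm_pos_iff.2 (sub_ne_zero.2 hne)
    obtain ⟨k, hk⟩ := PadicInt.exists_pow_neg_lt p hpos
    have heq : PadicInt.toZModPow k x = PadicInt.toZModPow k y := by
      apply hinj k
      rw [← key_compat p f hf k x, ← key_compat p f hf k y, hxy]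
    rw [toZModPow_eq_iff'] at heq
    exact absurd heq (not_le.2 hk)
  · have hcont : Continuous f := by
      have : LipschitzWith 1 f := LipschitzWith.of_dist_le_mul (fun x y => by
        rw [dist_eq_norm, dist_eq_norm, NNReal.coe_one, one_mul]; exact hf x y)
      exact this.continuous
    have hclosed : IsClosed (Set.range f) := (isCompact_range hcont).isClosed
    intro y
    have hy : y ∈ closure (Set.range f) := by
      rw [Metric.mem_closure_iff]
      intro ε hε
      obtain ⟨k, hk⟩ := PadicInt.exists_pow_neg_lt p hε
      haveI := pk_nezero p k
      obtain ⟨a, ha⟩ := (Finite.injective_iff_surjective.1 (hinj k)) (PadicInt.toZModPow k y)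
      refine ⟨f ((a.val : ℕ) : ℤ_[p]), Set.mem_range_self _, ?_⟩
      have heq : PadicInt.toZModPow k (f ((a.val : ℕ) : ℤ_[p])) = PadicInt.toZModPow k y := ha
      rw [dist_eq_norm]
      exact lt_of_le_of_lt ((toZModPow_eq_iff' p k y _).1 heq.symm) hk
    rw [hclosed.closure_eq] at hy
    exact hy
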